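/- arXiv:1501.02754 — 4 statements merged into one kernel-verified Lean document; each statement's English description precedes it below -/
import Mathlib

section
/- Let A and B be self-adjoint operators on a complex Hilbert space H and x ∈ Dom(AB) ∩ Dom(BA). For all real a, b, equality ‖(A - a)x‖ · ‖(B - b)x‖ = (1/2)|⟨[A,B]x, x⟩| holds if and only if (A - a)x and (B - b)x are purely imaginary scalar multiples of one another. -/
open Complex

private lemma cs_equality_iff {H : Type*} [NormedAddCommGroup H]
    [InnerProductSpace ℂ H] (u v : H) :
    ‖u‖ * ‖v‖ = (1 / 2) * ‖(inner ℂ v u : ℂ) - inner ℂ u v‖ ↔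
      ∃ t : ℝ, u = (Complex.I * t) • v ∨ v = (Complex.I * t) • u := by
  have hconj : (inner ℂ u v : ℂ) = starRingEnd ℂ (inner ℂ v u) := by
    rw [← inner_conj_symm]
  set z : ℂ := inner ℂ v u with hz
  have hnorm : ‖z - (inner ℂ u v : ℂ)‖ = 2 * |z.im| := by
    rw [hconj, Complex.sub_conj]
    rw [norm_mul, Complex.norm_I, mul_one, Complex.norm_real]
    simp [abs_mul]
  rw [hnorm]
  have hhalf : (1 / 2 : ℝ) * (2 * |z.im|) = |z.im| := by ring
  rw [hhalf]
  constructor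
  · intro h
    have him : |z.im| ≤ ‖z‖ := Complex.abs_im_le_norm z
    have hcs : ‖z‖ ≤ ‖v‖ * ‖u‖ := norm_inner_le_norm v u
    by_cases hv : v = 0
    · exact ⟨0, Or.inr (by simp [hv])⟩
    by_cases hu : u = 0
    · exact ⟨0, Or.inl (by simp [hu])⟩
    have heq : ‖z‖ = ‖v‖ * ‖u‖ := le_antisymm hcs (by
      calc ‖v‖ * ‖u‖ = ‖u‖ * ‖v‖ := mul_comm _ _
        _ = |z.im| := h
        _ ≤ ‖z‖ := him)
    have hre : z.re = 0 := by
      have h1 : ‖z‖ = |z.im| := le_antisymm (by rw [heq, ← mul_comm, ← h]) him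
      have h2 : ‖z‖ ^ 2 = z.re ^ 2 + z.im ^ 2 := by
        rw [Complex.sq_norm, Complex.normSq_apply]; ring
      have h3 : ‖z‖ = |z.im| := h1
      have h5 : z.re ^ 2 + z.im ^ 2 = z.im ^ 2 := by
        rw [← h2, h3, _root_.sq_abs]
      have h6 : z.re ^ 2 = 0 := by linarith
      exact pow_eq_zero_iff two_ne_zero |>.mp h6

    obtain ⟨r, hr0, hru⟩ := (norm_inner_eq_norm_iff hv hu).mp heq
    have hzval : z = r * (‖v‖ : ℂ) ^ 2 := by
      rw [hz, hru, inner_smul_right, inner_self_eq_norm_sq_to_K]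
      norm_cast
    have hvnorm : (0 : ℝ) < ‖v‖ := norm_pos_iff.mpr hv
    have hrre : r.re = 0 := by
      have hz2 : z.re = r.re * ‖v‖ ^ 2 := by
        rw [hzval]
        simp [Complex.mul_re, ← Complex.ofReal_pow]
      have hp : (0 : ℝ) < ‖v‖ ^ 2 := by positivity
      nlinarith
    refine ⟨r.im, Or.inl ?_⟩
    rw [hru]
    congr 1
    simp [Complex.ext_iff, hrre]
  · rintro ⟨t, h | h⟩
    · have hzval : z = (Complex.I * t) * (‖v‖ : ℂ) ^ 2 := by
        rw [hz, h, inner_smul_right, inner_self_eq_norm_sq_to_K]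
        norm_cast
      have him : z.im = t * ‖v‖ ^ 2 := by
        rw [hzval]
        simp [Complex.mul_im, Complex.mul_re, ← Complex.ofReal_pow]
      have hun : ‖u‖ = |t| * ‖v‖ := by
        rw [h, norm_smul, norm_mul, Complex.norm_I, one_mul, Complex.norm_real]
        simp
      rw [hun, him, abs_mul]
      rw [_root_.abs_of_nonneg (by positivity : (0:ℝ) ≤ ‖v‖ ^ 2)]
      ring
    · have hzval : z = (-(Complex.I) * t) * (‖u‖ : ℂ) ^ 2 := by
        rw [hz, h, inner_smul_left, inner_self_eq_norm_sq_to_K]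
        rw [show (starRingEnd ℂ) (Complex.I * t) = -(Complex.I) * t by
          simp [Complex.ext_iff]]
        norm_cast
      have him : z.im = -t * ‖u‖ ^ 2 := by
        rw [hzval]
        simp [Complex.mul_im, Complex.mul_re, ← Complex.ofReal_pow]
      have hvn : ‖v‖ = |t| * ‖u‖ := by
        rw [h, norm_smul, norm_mul, Complex.norm_I, one_mul, Complex.norm_real]
        simp
      rw [hvn, him, abs_mul]
      rw [_root_.abs_of_nonneg (by positivity : (0:ℝ) ≤ ‖u‖ ^ 2), abs_neg]
      ring

/-- Equality case in the Robertson uncertainty inequality: equality holds iff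
`(A - a)x` and `(B - b)x` are purely imaginary scalar multiples of one another. -/
theorem uncertainty_principle_equality_iff
    {H : Type*} [NormedAddCommGroup H] [InnerProductSpace ℂ H]
    (A B : H →ₗ[ℂ] H)
    (hA : ∀ x y : H, (inner ℂ (A x) y : ℂ) = inner ℂ x (A y))
    (hB : ∀ x y : H, (inner ℂ (B x) y : ℂ) = inner ℂ x (B y))
    (x : H) (a b : ℝ) :
    ‖A x - (a : ℂ) • x‖ * ‖B x - (b : ℂ) • x‖ =
        (1 / 2) * ‖(inner ℂ (A (B x) - B (A x)) x : ℂ)‖ ↔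
      ∃ t : ℝ, A x - (a : ℂ) • x = (Complex.I * t) • (B x - (b : ℂ) • x) ∨
        B x - (b : ℂ) • x = (Complex.I * t) • (A x - (a : ℂ) • x) := by
  set u : H := A x - (a : ℂ) • x with hu
  set v : H := B x - (b : ℂ) • x with hv
  have key : (inner ℂ (A (B x) - B (A x)) x : ℂ) = inner ℂ v u - inner ℂ u v := by
    have hAx : (inner ℂ (A x) x : ℂ) = inner ℂ x (A x) := hA x x
    have hBx : (inner ℂ (B x) x : ℂ) = inner ℂ x (B x) := hB x x
    have e1 : (inner ℂ (A (B x)) x : ℂ) = inner ℂ (B x) (A x) := hA (B x) x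
    have e2 : (inner ℂ (B (A x)) x : ℂ) = inner ℂ (A x) (B x) := hB (A x) x
    rw [inner_sub_left, e1, e2, hu, hv]
    simp only [inner_sub_left, inner_sub_right, inner_smul_left, inner_smul_right,
      Complex.conj_ofReal]
    rw [hAx, hBx]
    ring
  rw [key]
  exact cs_equality_iff u v
end

section
/- Let r be a complex number and C ≠ 0. If the function f(z) = C·exp(r·z² + s·z) (s any complex constant) satisfies lim_{z→∞} f(z)e^{-|z|²/2} = 0, then |r| ≤ 1/2. In particular, if r = (c-1)/(2(c+1)) for a real c ≠ -1, then c ≥ 0. -/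
open Filter Bornology

/-- If `f(z) = C·exp(r z² + s z)` with `C ≠ 0` satisfies
`f(z)e^{-|z|²/2} → 0` as `z → ∞`, then `|r| ≤ 1/2`; in particular if
`r = (c-1)/(2(c+1))` with real `c ≠ -1`, then `c ≥ 0`. -/
theorem gaussian_decay_necessary (r s C : ℂ) (hC : C ≠ 0)
    (h : Tendsto (fun z : ℂ =>
        C * Complex.exp (r * z ^ 2 + s * z) * Real.exp (-‖z‖ ^ 2 / 2))
      (cobounded ℂ) (nhds 0)) :
    ‖r‖ ≤ 1 / 2 ∧
      ∀ c : ℝ, c ≠ -1 → r = ((c : ℂ) - 1) / (2 * ((c : ℂ) + 1)) → 0 ≤ c := by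
  have hmain : ‖r‖ ≤ 1 / 2 := by
    by_contra hlt
    push_neg at hlt
    have hr : r ≠ 0 := by
      intro h0; rw [h0, norm_zero] at hlt; linarith
    obtain ⟨b, hb⟩ := IsAlgClosed.exists_pow_nat_eq ((‖r‖ : ℂ) / r) zero_lt_two
    have hb2 : b ^ 2 * r = (‖r‖ : ℂ) := by
      rw [hb]; field_simp
    have hnb : ‖b‖ = 1 := by
      have : ‖b‖ ^ 2 = 1 := by
        rw [← norm_pow, hb, norm_div, Complex.norm_real, Real.norm_eq_abs,
          abs_of_nonneg (norm_nonneg r), div_self (by simpa using hr)]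
      nlinarith [norm_nonneg b]
    have hpath : Tendsto (fun t : ℝ => (t : ℂ) * b) atTop (cobounded ℂ) := by
      rw [← tendsto_norm_atTop_iff_cobounded]
      simp only [norm_mul, Complex.norm_real, hnb, mul_one, Real.norm_eq_abs]
      exact tendsto_abs_atTop_atTop
    have hcomp := (h.comp hpath).norm
    simp only [Function.comp, norm_zero] at hcomp
    have hnorm : ∀ t : ℝ,
        ‖C * Complex.exp (r * ((t : ℂ) * b) ^ 2 + s * ((t : ℂ) * b)) *
          (Real.exp (-‖(t : ℂ) * b‖ ^ 2 / 2) : ℂ)‖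
        = ‖C‖ * Real.exp ((‖r‖ - 1/2) * t ^ 2 + (s * b).re * t) := by
      intro t
      have h1 : ‖(t : ℂ) * b‖ ^ 2 = t ^ 2 := by
        rw [norm_mul, Complex.norm_real, hnb, mul_one, Real.norm_eq_abs, sq_abs]
      have h2 : (r * ((t : ℂ) * b) ^ 2 + s * ((t : ℂ) * b)).re
          = ‖r‖ * t ^ 2 + (s * b).re * t := by
        have he : r * ((t : ℂ) * b) ^ 2 = ((‖r‖ * t ^ 2 : ℝ) : ℂ) := by
          push_cast; rw [mul_pow, ← hb2]; ring
        rw [he]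
        simp [Complex.add_re, Complex.mul_re, ← Complex.ofReal_pow, Complex.ofReal_re]
        ring
      rw [norm_mul, norm_mul]
      rw [show ‖Complex.exp (r * ((t : ℂ) * b) ^ 2 + s * ((t : ℂ) * b))‖
          = Real.exp ((r * ((t : ℂ) * b) ^ 2 + s * ((t : ℂ) * b)).re)
        from Complex.norm_exp _]
      rw [h2, Complex.norm_real, Real.norm_eq_abs, abs_of_pos (Real.exp_pos _), h1,
        mul_assoc, ← Real.exp_add]
      ring_nf
    rw [show (fun t : ℝ => ‖C * Complex.exp (r * ((t:ℂ) * b) ^ 2 + s * ((t:ℂ) * b)) *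
          (Real.exp (-‖(t:ℂ) * b‖ ^ 2 / 2) : ℂ)‖)
        = fun t : ℝ => ‖C‖ * Real.exp ((‖r‖ - 1/2) * t ^ 2 + (s * b).re * t)
      from funext hnorm] at hcomp
    have hdiv : Tendsto (fun t : ℝ => ‖C‖ * Real.exp ((‖r‖ - 1/2) * t ^ 2 + (s * b).re * t))
        atTop atTop := by
      apply Tendsto.const_mul_atTop (norm_pos_iff.mpr hC)
      apply Real.tendsto_exp_atTop.comp
      have : Tendsto (fun t : ℝ => t * ((‖r‖ - 1/2) * t + (s * b).re)) atTop atTop := by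
        apply Tendsto.atTop_mul_atTop₀ tendsto_id
        exact tendsto_atTop_add_const_right _ _
          (Tendsto.const_mul_atTop (by linarith) tendsto_id)
      convert this using 2 with t
      ring
    have h1 := hcomp.eventually (gt_mem_nhds (show (0:ℝ) < 1 by norm_num))
    have h2 := hdiv.eventually_ge_atTop 1
    obtain ⟨t, ht1, ht2⟩ := (h1.and h2).exists
    linarith
  refine ⟨hmain, fun c hc hr => ?_⟩
  rw [hr] at hmain
  have h1 : ((c : ℂ) - 1) = ((c - 1 : ℝ) : ℂ) := by push_cast; ring
  have h2 : (2 * ((c : ℂ) + 1)) = ((2 * (c + 1) : ℝ) : ℂ) := by push_cast; ring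
  rw [h1, h2, ← Complex.ofReal_div, Complex.norm_real, Real.norm_eq_abs, abs_div] at hmain
  have hc1 : (0:ℝ) < |2 * (c + 1)| := by
    rw [abs_pos]
    intro h0
    exact hc (by linarith [(mul_eq_zero.mp h0).resolve_left (two_ne_zero)])
  rw [div_le_iff₀ hc1] at hmain
  have habs : |c - 1| ≤ |c + 1| := by
    rw [abs_mul, abs_two] at hmain; linarith
  nlinarith [sq_abs (c - 1), sq_abs (c + 1), abs_nonneg (c - 1), abs_nonneg (c + 1),
    mul_self_le_mul_self (abs_nonneg (c - 1)) habs]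
end

section
/- Let D be an operator with [D, D*] = I on a complex Hilbert space, x a unit vector in Dom(DD*) ∩ Dom(D*D) with Dx + D*x ≠ 0 and Dx - D*x ≠ 0. Letting θ₊, θ₋ be the angles between x and Dx + D*x, respectively x and Dx - D*x, one has ‖Dx + D*x‖ · ‖Dx - D*x‖ · |sin θ₊ · sin θ₋| ≥ 1. -/
open ComplexConjugate

/-- Angle version of the uncertainty principle: for `[D,D*] = I`, a unit vector
`x`, and angles `θ₊`, `θ₋` between `x` and `Dx ± D*x`,
`‖Dx + D*x‖·‖Dx - D*x‖·|sin θ₊ · sin θ₋| ≥ 1`. -/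
theorem uncertainty_angle_version
    {H : Type*} [NormedAddCommGroup H] [InnerProductSpace ℂ H]
    (D Dstar : H →ₗ[ℂ] H)
    (hadj : ∀ x y : H, (inner ℂ (D x) y : ℂ) = inner ℂ x (Dstar y))
    (hccr : ∀ y : H, D (Dstar y) - Dstar (D y) = y)
    (x : H) (hx : ‖x‖ = 1)
    (hp : D x + Dstar x ≠ 0) (hm : D x - Dstar x ≠ 0) :
    ‖D x + Dstar x‖ * ‖D x - Dstar x‖ *
      |Real.sin (Real.arccos
          (‖(inner ℂ (D x + Dstar x) x : ℂ)‖ / (‖D x + Dstar x‖ * ‖x‖))) *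
        Real.sin (Real.arccos
          (‖(inner ℂ (D x - Dstar x) x : ℂ)‖ / (‖D x - Dstar x‖ * ‖x‖)))| ≥ 1 := by
  have hmulconj : ∀ z : ℂ, z * conj z = (‖z‖:ℂ)^2 := by
    intro z
    rw [Complex.mul_conj, Complex.normSq_eq_norm_sq]; push_cast; ring
  have hxx : (inner ℂ x x : ℂ) = 1 := by
    rw [inner_self_eq_norm_sq_to_K, hx]; norm_num
  set u := D x + Dstar x with hu
  set v := D x - Dstar x with hv
  -- projection formula
  have hexp : ∀ a b : H,
      (inner ℂ (a - (inner ℂ x a : ℂ) • x) (b - (inner ℂ x b : ℂ) • x) : ℂ)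
        = inner ℂ a b - (inner ℂ a x : ℂ) * inner ℂ x b := by
    intro a b
    have h1 : conj (inner ℂ x a : ℂ) = inner ℂ a x := inner_conj_symm a x
    simp only [inner_sub_left, inner_sub_right, inner_smul_left, inner_smul_right, hxx,
      mul_one, h1]
    ring
  set Pu := u - (inner ℂ x u : ℂ) • x with hPu
  set Pv := v - (inner ℂ x v : ℂ) • x with hPv
  -- basic inner ℂ product facts
  set p : ℂ := inner ℂ (D x) x with hpdef
  have hxDs : (inner ℂ x (Dstar x) : ℂ) = p := (hadj x x).symm
  have hxD : (inner ℂ x (D x) : ℂ) = conj p := by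
    rw [← inner_conj_symm]
  have hDsx : (inner ℂ (Dstar x) x : ℂ) = conj p := by
    rw [← inner_conj_symm, hxDs]
  set c : ℂ := inner ℂ (D x) (Dstar x) with hcdef
  have hcc : (inner ℂ (Dstar x) (D x) : ℂ) = conj c := by
    rw [← inner_conj_symm]
  -- norm difference from commutator
  have hDD : (inner ℂ (D x) (D x) : ℂ) = inner ℂ x (Dstar (D x)) := hadj x (D x)
  have hDsDs : (inner ℂ (Dstar x) (Dstar x) : ℂ) = inner ℂ (D (Dstar x)) x :=
    (hadj (Dstar x) x).symm
  have hcomm : (inner ℂ (D (Dstar x)) x : ℂ) - inner ℂ (Dstar (D x)) x = 1 := by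
    rw [← inner_sub_left, hccr x, hxx]
  have hDsDx : (inner ℂ (Dstar (D x)) x : ℂ) = inner ℂ (D x) (D x) := by
    rw [← inner_conj_symm, ← hDD, inner_conj_symm]
  have hdiff : (inner ℂ (Dstar x) (Dstar x) : ℂ) - inner ℂ (D x) (D x) = 1 := by
    rw [hDsDs, ← hDsDx] at *
    linear_combination hcomm
  -- real part of ⟪Pu, Pv⟫ is -1
  have huv : (inner ℂ u v : ℂ) = (inner ℂ (D x) (D x) : ℂ) - inner ℂ (Dstar x) (Dstar x)
      + (conj c - c) := by
    simp only [hu, hv, inner_add_left, inner_sub_right, hcc, ← hcdef]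
    ring
  have hux : (inner ℂ u x : ℂ) = p + conj p := by
    simp only [hu, inner_add_left, ← hpdef, hDsx]
  have hxv : (inner ℂ x v : ℂ) = conj p - p := by
    simp only [hv, inner_sub_right, hxD, hxDs]
  have hPuPv : (inner ℂ Pu Pv : ℂ) = (-1 : ℂ) + (conj c - c) - (conj (p^2) - p^2) := by
    rw [hPu, hPv, hexp, huv, hux, hxv]
    have h1 : (inner ℂ (D x) (D x) : ℂ) - inner ℂ (Dstar x) (Dstar x) = -1 := by
      linear_combination -hdiff
    rw [h1, map_pow]
    ring
  have hre : (inner ℂ Pu Pv : ℂ).re = -1 := by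
    rw [hPuPv]
    simp [← map_pow, Complex.add_re, Complex.sub_re, Complex.conj_re]
  -- 1 ≤ ‖Pu‖ * ‖Pv‖
  have hstep : (1:ℝ) ≤ ‖Pu‖ * ‖Pv‖ := by
    have h1 : |(inner ℂ Pu Pv : ℂ).re| ≤ ‖(inner ℂ Pu Pv : ℂ)‖ := Complex.abs_re_le_norm _
    have h2 : ‖(inner ℂ Pu Pv : ℂ)‖ ≤ ‖Pu‖ * ‖Pv‖ := norm_inner_le_norm Pu Pv
    rw [hre] at h1
    simpa using h1.trans h2
  -- ‖Pw‖² = ‖w‖² - ‖⟪w,x⟫‖²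
  have hnorm : ∀ w : H, ‖w - (inner ℂ x w : ℂ) • x‖^2 = ‖w‖^2 - ‖(inner ℂ w x : ℂ)‖^2 := by
    intro w
    have h1 : (inner ℂ (w - (inner ℂ x w : ℂ) • x) (w - (inner ℂ x w : ℂ) • x) : ℂ)
        = inner ℂ w w - (inner ℂ w x : ℂ) * inner ℂ x w := hexp w w
    have h2 : (inner ℂ w x : ℂ) * inner ℂ x w = (‖(inner ℂ w x : ℂ)‖:ℂ)^2 := by
      have h3 := hmulconj (inner ℂ w x : ℂ)
      rwa [inner_conj_symm] at h3
    rw [inner_self_eq_norm_sq_to_K, inner_self_eq_norm_sq_to_K, h2] at h1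
    have h4 : ((‖w - (inner ℂ x w : ℂ) • x‖^2 : ℝ) : ℂ)
        = ((‖w‖^2 - ‖(inner ℂ w x : ℂ)‖^2 : ℝ) : ℂ) := by push_cast; exact h1
    exact_mod_cast h4
  -- ‖w‖ * sin θ = ‖Pw‖
  have hsin : ∀ w : H, w ≠ 0 →
      ‖w‖ * Real.sin (Real.arccos (‖(inner ℂ w x : ℂ)‖ / (‖w‖ * ‖x‖)))
        = ‖w - (inner ℂ x w : ℂ) • x‖ := by
    intro w hw
    have hwn : (0:ℝ) < ‖w‖ := norm_pos_iff.mpr hw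
    rw [hx, mul_one, Real.sin_arccos]
    rw [← Real.sqrt_sq hwn.le, ← Real.sqrt_mul (sq_nonneg _)]
    rw [← Real.sqrt_sq (norm_nonneg (w - (inner ℂ x w : ℂ) • x)), hnorm w]
    congr 1
    field_simp
    rw [Real.sq_sqrt (sq_nonneg _)]
  have hsp := hsin u hp
  have hsm := hsin v hm
  -- sines are nonneg
  have hnn : ∀ t : ℝ, 0 ≤ Real.sin (Real.arccos t) := by
    intro t; rw [Real.sin_arccos]; exact Real.sqrt_nonneg _
  rw [ge_iff_le, abs_of_nonneg (mul_nonneg (hnn _) (hnn _))]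
  calc (1:ℝ) ≤ ‖Pu‖ * ‖Pv‖ := hstep
    _ = (‖u‖ * Real.sin (Real.arccos (‖(inner ℂ u x : ℂ)‖ / (‖u‖ * ‖x‖))))
        * (‖v‖ * Real.sin (Real.arccos (‖(inner ℂ v x : ℂ)‖ / (‖v‖ * ‖x‖)))) := by
        rw [hsp, hsm]
    _ = ‖u‖ * ‖v‖ * (Real.sin (Real.arccos (‖(inner ℂ u x : ℂ)‖ / (‖u‖ * ‖x‖)))
        * Real.sin (Real.arccos (‖(inner ℂ v x : ℂ)‖ / (‖v‖ * ‖x‖)))) := by ring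
end

section
/- Let D be an operator with [D, D*] = I, x a unit vector in Dom(DD*) ∩ Dom(D*D). Then (‖Dx + D*x‖² - |⟨Dx + D*x, x⟩|²) · (‖Dx - D*x‖² - |⟨Dx - D*x, x⟩|²) ≥ 1. -/
open scoped InnerProductSpace ComplexConjugate

lemma aux_dist_sq {H : Type*} [NormedAddCommGroup H] [InnerProductSpace ℂ H]
    (x y : H) (hx : ‖x‖ = 1) :
    ‖y - (⟪x, y⟫_ℂ) • x‖ ^ 2 = ‖y‖ ^ 2 - ‖(⟪y, x⟫_ℂ)‖ ^ 2 := by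
  have h := @norm_sub_sq ℂ _ _ _ _ y ((⟪x, y⟫_ℂ) • x)
  have h1 : RCLike.re ⟪y, (⟪x, y⟫_ℂ) • x⟫_ℂ = ‖⟪x, y⟫_ℂ‖ ^ 2 := by
    rw [inner_smul_right,
      show ⟪y, x⟫_ℂ = conj ⟪x, y⟫_ℂ from (inner_conj_symm y x).symm,
      Complex.mul_conj]
    simp [Complex.normSq_eq_norm_sq, ← Complex.ofReal_pow]
  have h2 : ‖(⟪x, y⟫_ℂ) • x‖ = ‖⟪x, y⟫_ℂ‖ := by
    rw [norm_smul, hx, mul_one]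
  have h3 : ‖⟪y, x⟫_ℂ‖ = ‖⟪x, y⟫_ℂ‖ := norm_inner_symm y x
  rw [h, h1, h2, h3]; ring

/-- For `[D,D*] = I` and a unit vector `x`:
`(‖Dx + D*x‖² - |⟨Dx + D*x, x⟩|²)(‖Dx - D*x‖² - |⟨Dx - D*x, x⟩|²) ≥ 1`. -/
theorem uncertainty_variance_version
    {H : Type*} [NormedAddCommGroup H] [InnerProductSpace ℂ H]
    (D Dstar : H →ₗ[ℂ] H)
    (hadj : ∀ x y : H, (inner ℂ (D x) y : ℂ) = inner ℂ x (Dstar y))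
    (hccr : ∀ y : H, D (Dstar y) - Dstar (D y) = y)
    (x : H) (hx : ‖x‖ = 1) :
    (‖D x + Dstar x‖ ^ 2 - ‖(inner ℂ (D x + Dstar x) x : ℂ)‖ ^ 2) *
      (‖D x - Dstar x‖ ^ 2 - ‖(inner ℂ (D x - Dstar x) x : ℂ)‖ ^ 2) ≥ 1 := by
  have hadj' : ∀ y z : H, (⟪Dstar y, z⟫_ℂ) = ⟪y, D z⟫_ℂ := by
    intro y z
    rw [← inner_conj_symm, ← hadj, inner_conj_symm]
  set A := D x + Dstar x with hA
  set B := D x - Dstar x with hB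
  have hxx : ⟪x, x⟫_ℂ = 1 := by
    rw [inner_self_eq_norm_sq_to_K, hx]; norm_num
  have hdd : ⟪D x, D x⟫_ℂ - ⟪Dstar x, Dstar x⟫_ℂ = -1 := by
    rw [hadj, hadj', ← inner_sub_right]
    have h : Dstar (D x) - D (Dstar x) = -x := by
      have := hccr x
      linear_combination (norm := module) -this
    rw [h, inner_neg_right, hxx]
  have hcA : conj (⟪A, x⟫_ℂ) = ⟪A, x⟫_ℂ := by
    rw [inner_conj_symm]
    simp only [hA, inner_add_left, inner_add_right, hadj, hadj']
    ring
  have hcB : conj (⟪B, x⟫_ℂ) = -⟪B, x⟫_ℂ := by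
    rw [inner_conj_symm]
    simp only [hB, inner_sub_left, inner_sub_right, hadj, hadj']
    ring
  have hre : ⟪A, B⟫_ℂ + conj (⟪A, B⟫_ℂ) = -2 := by
    rw [inner_conj_symm]
    simp only [hA, hB, inner_add_left, inner_add_right, inner_sub_left, inner_sub_right]
    linear_combination 2 * hdd
  set u := A - (⟪x, A⟫_ℂ) • x with hu
  set v := B - (⟪x, B⟫_ℂ) • x with hv
  have huv : ⟪u, v⟫_ℂ = ⟪A, B⟫_ℂ - conj (⟪x, A⟫_ℂ) * ⟪x, B⟫_ℂ := by
    simp only [hu, hv, inner_sub_left, inner_sub_right, inner_smul_left, inner_smul_right, hxx]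
    rw [← inner_conj_symm A x, ← inner_conj_symm x B]
    ring_nf
  have h1c : conj (⟪x, A⟫_ℂ) = ⟪x, A⟫_ℂ := by
    rw [inner_conj_symm, ← hcA, inner_conj_symm]
  have h2c : conj (⟪x, B⟫_ℂ) = -⟪x, B⟫_ℂ := by
    calc conj (⟪x, B⟫_ℂ) = ⟪B, x⟫_ℂ := inner_conj_symm B x
      _ = conj (conj ⟪B, x⟫_ℂ) := (Complex.conj_conj _).symm
      _ = conj (-⟪B, x⟫_ℂ) := by rw [hcB]
      _ = -⟪x, B⟫_ℂ := by rw [map_neg, inner_conj_symm]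
  have hz : (conj (⟪x, A⟫_ℂ) * ⟪x, B⟫_ℂ).re = 0 := by
    set z := conj (⟪x, A⟫_ℂ) * ⟪x, B⟫_ℂ with hzdef
    have hcz : conj z = -z := by
      rw [hzdef, map_mul, Complex.conj_conj, h2c, h1c]; ring
    have h := congrArg Complex.re hcz
    simp only [Complex.conj_re, Complex.neg_re] at h
    linarith
  have hreuv : (⟪u, v⟫_ℂ).re = -1 := by
    have h2re : (⟪A, B⟫_ℂ).re = -1 := by
      have h := congrArg Complex.re hre
      simp only [Complex.add_re, Complex.conj_re] at h
      norm_num at h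
      linarith
    rw [huv, Complex.sub_re, h2re, hz]; ring
  have hcs : ‖⟪u, v⟫_ℂ‖ ≤ ‖u‖ * ‖v‖ := norm_inner_le_norm u v
  have h1 : (1 : ℝ) ≤ ‖⟪u, v⟫_ℂ‖ ^ 2 := by
    have h := Complex.abs_re_le_norm (⟪u, v⟫_ℂ)
    rw [hreuv, abs_neg, abs_one] at h
    nlinarith [norm_nonneg (⟪u, v⟫_ℂ)]
  have h2 : ‖⟪u, v⟫_ℂ‖ ^ 2 ≤ ‖u‖ ^ 2 * ‖v‖ ^ 2 := by
    nlinarith [norm_nonneg (⟪u, v⟫_ℂ), norm_nonneg u, norm_nonneg v]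
  have hU : ‖u‖ ^ 2 = ‖A‖ ^ 2 - ‖⟪A, x⟫_ℂ‖ ^ 2 := aux_dist_sq x A hx
  have hV : ‖v‖ ^ 2 = ‖B‖ ^ 2 - ‖⟪B, x⟫_ℂ‖ ^ 2 := aux_dist_sq x B hx
  calc (1:ℝ) ≤ ‖⟪u, v⟫_ℂ‖ ^ 2 := h1
    _ ≤ ‖u‖ ^ 2 * ‖v‖ ^ 2 := h2
    _ = _ := by rw [hU, hV]
end
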